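/- Let T : A → B be an injective triple morphism between unital C*-algebras with 1_B ∈ T(A). Then u = T(1_A) is a unitary of B, the range T(A) is a C*-subalgebra of B, T(A) = π(A) where π = u*T(·), and π is a unital *-homomorphism. -/

import Mathlib

/-- If `T : A → B` is an injective triple morphism between unital C*-algebras with
`1_B ∈ T(A)`, then `u = T(1)` is a unitary of `B`, the range of `T` is a C*-subalgebra of
`B`, `T(A) = π(A)` for the unital *-homomorphism `π = u* T(·)`. -/
theorem triple_morphism_with_one_in_range
    {A B : Type*} [CStarAlgebra A] [CStarAlgebra B]
    (T : A →ₗ[ℂ] B)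
    (htriple : ∀ x y z : A, T (x * star y * z) = T x * star (T y) * T z)
    (hinj : Function.Injective T)
    (hone : (1 : B) ∈ Set.range T) :
    (star (T 1) * T 1 = 1 ∧ T 1 * star (T 1) = 1) ∧
    (IsClosed (Set.range T) ∧
      (∀ x ∈ Set.range T, star x ∈ Set.range T) ∧
      (∀ x ∈ Set.range T, ∀ y ∈ Set.range T, x * y ∈ Set.range T)) ∧
    Set.range T = Set.range (fun a : A => star (T 1) * T a) ∧
    (star (T 1) * T 1 = 1 ∧
      (∀ a b : A, star (T 1) * T (a * b) = (star (T 1) * T a) * (star (T 1) * T b)) ∧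
      (∀ a : A, star (T 1) * T (star a) = star (star (T 1) * T a))) := by
  obtain ⟨b, hb⟩ := hone
  set u := T 1 with hu
  -- u * star u = 1
  have h1 : u * star u = 1 := by
    have := htriple 1 1 b
    rw [one_mul, star_one, one_mul, hb] at this
    rw [mul_one] at this
    exact this.symm
  -- star u * u = 1
  have h2 : star u * u = 1 := by
    have := htriple b 1 1
    rw [star_one, mul_one, mul_one, hb, one_mul] at this
    exact this.symm
  -- T (star a) = u * star (T a) * u
  have hstar : ∀ a : A, T (star a) = u * star (T a) * u := by
    intro a
    have := htriple 1 a 1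
    rwa [one_mul, mul_one] at this
  -- star u * T (a * c) = (star u * T a) * (star u * T c)
  have hmul : ∀ a c : A, star u * T (a * c) = (star u * T a) * (star u * T c) := by
    intro a c
    have h := htriple a 1 c
    rw [star_one, mul_one] at h
    rw [h, ← hu, mul_assoc, mul_assoc]
  -- star u * T (star a) = star (star u * T a)
  have hstar' : ∀ a : A, star u * T (star a) = star (star u * T a) := by
    intro a
    rw [hstar a, star_mul, star_star, ← mul_assoc, ← mul_assoc, h2, one_mul]
  -- star (T a) ∈ range T
  have hstar_mem : ∀ a : A, star (T a) = T (b * star a * b) := by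
    intro a
    rw [htriple, hb, one_mul, mul_one]
  -- range equality
  have hrange : Set.range T = Set.range (fun a : A => star u * T a) := by
    apply Set.eq_of_subset_of_subset
    · rintro x ⟨a, rfl⟩
      refine ⟨star b * a, ?_⟩
      have h := htriple 1 b a
      rw [one_mul, hb, star_one, mul_one] at h
      simp only [h, ← mul_assoc, ← hu, h2, one_mul]
    · rintro x ⟨a, rfl⟩
      refine ⟨b * a, ?_⟩
      have h := htriple b 1 a
      rw [star_one, mul_one, hb, one_mul] at h
      simp only [h, hu, mul_one]
  -- π as a non-unital star algebra hom
  let π : A →⋆ₙₐ[ℂ] B :=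
    { toFun := fun a => star u * T a
      map_smul' := fun r a => by simp [map_smul, mul_smul_comm]
      map_zero' := by simp
      map_add' := fun a c => by simp [map_add, mul_add]
      map_mul' := hmul
      map_star' := hstar' }
  have hπinj : Function.Injective π := by
    intro a c h
    apply hinj
    have : u * (star u * T a) = u * (star u * T c) := by
      simpa [π] using congrArg (u * ·) h
    rwa [← mul_assoc, ← mul_assoc, h1, one_mul, one_mul] at this
  have hclosed : IsClosed (Set.range T) := by
    rw [hrange]
    have hiso : Isometry π := NonUnitalStarAlgHom.isometry π hπinj
    exact hiso.isClosedEmbedding.isClosed_range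
  refine ⟨⟨h2, h1⟩, ⟨hclosed, ?_, ?_⟩, hrange, h2, hmul, hstar'⟩
  · rintro x ⟨a, rfl⟩
    exact ⟨b * star a * b, (hstar_mem a).symm⟩
  · rintro x ⟨a, rfl⟩ y ⟨c, rfl⟩
    refine ⟨a * star (b * star c * b) * b, ?_⟩
    rw [htriple, ← hstar_mem, star_star, hb, mul_one]
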